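/- Let ℓ : ℝ → ℝ≥0 be a unimodal measurable function (i.e. there exists z ∈ ℝ such that ℓ is nondecreasing on (−∞, z] and nonincreasing on [z, ∞)) with finite supremum. Then for any h > 0, ∫_ℝ |ℓ(t) − ℓ(t + h)| dt ≤ 3h · sup_{t∈ℝ} ℓ(t). -/

import Mathlib

open MeasureTheory
open scoped ENNReal

open Set ENNReal in
private lemma lintegral_Icc_shift (f : ℝ → ℝ≥0∞) (c d h' : ℝ) :
    ∫⁻ t in Icc c d, f (t + h') = ∫⁻ t in Icc (c + h') (d + h'), f t := by
  rw [← lintegral_indicator measurableSet_Icc, ← lintegral_indicator measurableSet_Icc,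
    ← lintegral_add_right_eq_self ((Icc (c + h') (d + h')).indicator f) h']
  congr 1
  funext x
  by_cases hx : x ∈ Icc c d
  · rw [indicator_of_mem hx, indicator_of_mem (by simpa [add_le_add_iff_right] using hx)]
  · rw [indicator_of_notMem hx, indicator_of_notMem (by simpa [add_le_add_iff_right] using hx)]

open Set ENNReal in
private lemma lintegral_Iic_eq_iSup (f : ℝ → ℝ≥0∞) (hf : Measurable f) (a : ℝ) :
    ∫⁻ t in Iic a, f t = ⨆ n : ℕ, ∫⁻ t in Icc (a - n) a, f t := by
  have hset : Iic a = ⋃ n : ℕ, Icc (a - n) a := by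
    ext x
    simp only [mem_Iic, mem_iUnion, mem_Icc]
    constructor
    · intro hx
      obtain ⟨n, hn⟩ := exists_nat_ge (a - x)
      exact ⟨n, by linarith, hx⟩
    · rintro ⟨n, _, hx⟩; exact hx
  rw [hset, ← lintegral_indicator (MeasurableSet.iUnion fun n => measurableSet_Icc)]
  have hind : ∀ x, (⋃ n : ℕ, Icc (a - n) a).indicator f x
      = ⨆ n : ℕ, (Icc (a - (n : ℝ)) a).indicator f x := fun x =>
    Set.indicator_iUnion_apply (M := ℝ≥0∞) rfl _ _ _
  simp_rw [hind]
  rw [lintegral_iSup (fun n => hf.indicator measurableSet_Icc)]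
  · simp_rw [lintegral_indicator measurableSet_Icc]
  · intro m n hmn x
    simp only
    by_cases hx : x ∈ Icc (a - (m : ℝ)) a
    · rw [indicator_of_mem hx]
      have hx' : x ∈ Icc (a - (n : ℝ)) a := ⟨by
        have : (m : ℝ) ≤ n := Nat.cast_le.2 hmn
        linarith [hx.1], hx.2⟩
      rw [indicator_of_mem hx']
    · rw [indicator_of_notMem hx]; exact zero_le

open Set ENNReal in
private lemma tail_telescope_bound (g : ℝ → ℝ) (hg : Measurable g) (hg0 : ∀ t, 0 ≤ g t)
    (S : ℝ) (hS : ∀ t, g t ≤ S) (a h : ℝ) (hh : 0 < h)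
    (hmono : MonotoneOn g (Set.Iic (a + h))) :
    ∫⁻ t in Set.Iic a, ENNReal.ofReal (g (t + h) - g t)
      ≤ ENNReal.ofReal h * ENNReal.ofReal S := by
  have hgmeas : Measurable fun t : ℝ => ENNReal.ofReal (g t) := hg.ennreal_ofReal
  have hgshift : Measurable fun t : ℝ => ENNReal.ofReal (g (t + h)) :=
    (hg.comp (measurable_add_const h)).ennreal_ofReal
  have hFmeas : Measurable fun t : ℝ => ENNReal.ofReal (g (t + h) - g t) :=
    ((hg.comp (measurable_add_const h)).sub hg).ennreal_ofReal
  rw [lintegral_Iic_eq_iSup _ hFmeas a]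
  refine iSup_le fun n => ?_
  by_cases hn : (n : ℝ) ≤ h
  · calc ∫⁻ t in Icc (a - n) a, ENNReal.ofReal (g (t + h) - g t)
        ≤ ∫⁻ _t in Icc (a - n) a, ENNReal.ofReal S :=
          lintegral_mono fun t => ENNReal.ofReal_le_ofReal (by linarith [hg0 t, hS (t + h)])
      _ = ENNReal.ofReal S * volume (Icc (a - n) a) := setLIntegral_const _ _
      _ ≤ ENNReal.ofReal S * ENNReal.ofReal h := by
          rw [Real.volume_Icc]
          refine mul_le_mul_right (ENNReal.ofReal_le_ofReal ?_) _
          linarith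
      _ = ENNReal.ofReal h * ENNReal.ofReal S := mul_comm _ _
  · push_neg at hn
    have hfin : ∫⁻ t in Icc (a - n) a, ENNReal.ofReal (g t) ≠ ⊤ := by
      refine ne_top_of_le_ne_top ?_
        (lintegral_mono fun t => ENNReal.ofReal_le_ofReal (hS t) : _)
      rw [setLIntegral_const]
      exact (ENNReal.mul_lt_top ENNReal.ofReal_lt_top measure_Icc_lt_top).ne
    have hle : (fun t => ENNReal.ofReal (g t))
        ≤ᵐ[volume.restrict (Icc (a - n) a)] fun t => ENNReal.ofReal (g (t + h)) := by
      filter_upwards [ae_restrict_mem measurableSet_Icc] with t ht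
      refine ENNReal.ofReal_le_ofReal (hmono ?_ ?_ (by linarith))
      · exact mem_Iic.2 (by linarith [ht.2])
      · exact mem_Iic.2 (by linarith [ht.2])
    have hsub : ∫⁻ t in Icc (a - n) a, ENNReal.ofReal (g (t + h) - g t)
        = (∫⁻ t in Icc (a - n) a, ENNReal.ofReal (g (t + h)))
          - ∫⁻ t in Icc (a - n) a, ENNReal.ofReal (g t) := by
      rw [← lintegral_sub hgmeas hfin hle]
      exact lintegral_congr fun t => ENNReal.ofReal_sub _ (hg0 t)
    rw [hsub]
    rw [tsub_le_iff_right]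
    have hshift : ∫⁻ t in Icc (a - n) a, ENNReal.ofReal (g (t + h))
        = ∫⁻ t in Icc (a - n + h) (a + h), ENNReal.ofReal (g t) :=
      lintegral_Icc_shift (fun t => ENNReal.ofReal (g t)) (a - n) a h
    rw [hshift]
    have hsplit : Icc (a - n + h) (a + h) = Icc (a - n + h) a ∪ Ioc a (a + h) :=
      (Set.Icc_union_Ioc_eq_Icc (by linarith) (by linarith)).symm
    have hdisj : Disjoint (Icc (a - n + h) a) (Ioc a (a + h)) := by
      rw [Set.disjoint_left]
      rintro x ⟨_, hx2⟩ ⟨hx3, _⟩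
      linarith
    rw [hsplit, lintegral_union measurableSet_Ioc hdisj]
    have h1 : ∫⁻ t in Icc (a - n + h) a, ENNReal.ofReal (g t)
        ≤ ∫⁻ t in Icc (a - n) a, ENNReal.ofReal (g t) :=
      lintegral_mono_set (Icc_subset_Icc_left (by linarith))
    have h2 : ∫⁻ t in Ioc a (a + h), ENNReal.ofReal (g t)
        ≤ ENNReal.ofReal h * ENNReal.ofReal S := by
      calc ∫⁻ t in Ioc a (a + h), ENNReal.ofReal (g t)
          ≤ ∫⁻ _t in Ioc a (a + h), ENNReal.ofReal S :=
            lintegral_mono fun t => ENNReal.ofReal_le_ofReal (hS t)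
        _ = ENNReal.ofReal S * volume (Ioc a (a + h)) := setLIntegral_const _ _
        _ = ENNReal.ofReal h * ENNReal.ofReal S := by
            rw [Real.volume_Ioc, add_sub_cancel_left, mul_comm]
    calc (∫⁻ t in Icc (a - n + h) a, ENNReal.ofReal (g t))
          + ∫⁻ t in Ioc a (a + h), ENNReal.ofReal (g t)
        ≤ (∫⁻ t in Icc (a - n) a, ENNReal.ofReal (g t))
          + ENNReal.ofReal h * ENNReal.ofReal S := add_le_add h1 h2
      _ = ENNReal.ofReal h * ENNReal.ofReal S
          + ∫⁻ t in Icc (a - n) a, ENNReal.ofReal (g t) := add_comm _ _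

/-- For a nonnegative unimodal function `ℓ` on `ℝ` with bounded range,
`∫ |ℓ(t) − ℓ(t+h)| dt ≤ 3h · sup ℓ`. -/
theorem unimodal_shift_L1_bound
    (ℓ : ℝ → ℝ) (hmeas : Measurable ℓ) (hℓ0 : ∀ t, 0 ≤ ℓ t)
    (z : ℝ) (hmono : MonotoneOn ℓ (Set.Iic z)) (hanti : AntitoneOn ℓ (Set.Ici z))
    (hbdd : BddAbove (Set.range ℓ))
    (h : ℝ) (hh : 0 < h) :
    ∫ t, |ℓ t - ℓ (t + h)| ≤ 3 * h * sSup (Set.range ℓ) := by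
  classical
  set S := sSup (Set.range ℓ) with hSdef
  have hSle : ∀ t, ℓ t ≤ S := fun t => le_csSup hbdd (Set.mem_range_self t)
  have hS0 : 0 ≤ S := (hℓ0 0).trans (hSle 0)
  have hshiftmeas : Measurable fun t : ℝ => ℓ (t + h) := hmeas.comp (measurable_add_const h)
  have hdiffmeas : Measurable fun t : ℝ => ℓ t - ℓ (t + h) := hmeas.sub hshiftmeas
  have habsmeas : Measurable fun t : ℝ => |ℓ t - ℓ (t + h)| := hdiffmeas.abs
  have hDmeas : Measurable fun t : ℝ => ENNReal.ofReal |ℓ t - ℓ (t + h)| :=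
    habsmeas.ennreal_ofReal
  -- left tail bound
  have hleft : ∫⁻ t in Set.Iic (z - h), ENNReal.ofReal |ℓ t - ℓ (t + h)|
      ≤ ENNReal.ofReal h * ENNReal.ofReal S := by
    have hcongr : ∫⁻ t in Set.Iic (z - h), ENNReal.ofReal |ℓ t - ℓ (t + h)|
        = ∫⁻ t in Set.Iic (z - h), ENNReal.ofReal (ℓ (t + h) - ℓ t) := by
      refine setLIntegral_congr_fun measurableSet_Iic ?_
      intro t ht
      have h1 : ℓ t ≤ ℓ (t + h) := hmono (Set.mem_Iic.2 (by linarith [Set.mem_Iic.1 ht]))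
        (Set.mem_Iic.2 (by linarith [Set.mem_Iic.1 ht])) (by linarith)
      dsimp only
      rw [abs_of_nonpos (by linarith), neg_sub]
    rw [hcongr]
    have hmono' : MonotoneOn ℓ (Set.Iic (z - h + h)) := by
      have : z - h + h = z := by ring
      rw [this]; exact hmono
    exact tail_telescope_bound ℓ hmeas hℓ0 S hSle (z - h) h hh hmono'
  -- right tail bound (by reflection)
  have hright : ∫⁻ t in Set.Ioi z, ENNReal.ofReal |ℓ t - ℓ (t + h)|
      ≤ ENNReal.ofReal h * ENNReal.ofReal S := by
    have hcongr : ∫⁻ t in Set.Ioi z, ENNReal.ofReal |ℓ t - ℓ (t + h)|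
        = ∫⁻ t in Set.Ioi z, ENNReal.ofReal (ℓ t - ℓ (t + h)) := by
      refine setLIntegral_congr_fun measurableSet_Ioi ?_
      intro t ht
      have h1 : ℓ (t + h) ≤ ℓ t := hanti (Set.mem_Ici.2 (le_of_lt (Set.mem_Ioi.1 ht)))
        (Set.mem_Ici.2 (by linarith [Set.mem_Ioi.1 ht])) (by linarith)
      dsimp only
      rw [abs_of_nonneg (by linarith)]
    rw [hcongr]
    have hmonoset : ∫⁻ t in Set.Ioi z, ENNReal.ofReal (ℓ t - ℓ (t + h))
        ≤ ∫⁻ t in Set.Ici z, ENNReal.ofReal (ℓ t - ℓ (t + h)) :=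
      lintegral_mono_set Set.Ioi_subset_Ici_self
    refine hmonoset.trans ?_
    set g : ℝ → ℝ := fun u => ℓ (-u) with hgdef
    have hrefl : ∫⁻ t in Set.Ici z, ENNReal.ofReal (ℓ t - ℓ (t + h))
        = ∫⁻ u in Set.Iic (-z - h), ENNReal.ofReal (g (u + h) - g u) := by
      rw [← lintegral_indicator measurableSet_Ici, ← lintegral_indicator measurableSet_Iic]
      set F : ℝ → ℝ≥0∞ :=
        (Set.Ici z).indicator fun t => ENNReal.ofReal (ℓ t - ℓ (t + h)) with hFdef
      have hneg : ∫⁻ u, F (-u) = ∫⁻ t, F t := by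
        conv_rhs => rw [← Measure.map_neg_eq_self (volume : Measure ℝ)]
        exact (lintegral_map_equiv F (MeasurableEquiv.neg ℝ)).symm
      have htrans : ∫⁻ u, F (-(u + h)) = ∫⁻ u, F (-u) :=
        lintegral_add_right_eq_self (fun u => F (-u)) h
      have hpt : ∀ u, F (-(u + h))
          = (Set.Iic (-z - h)).indicator (fun u => ENNReal.ofReal (g (u + h) - g u)) u := by
        intro u
        have harg : -(u + h) + h = -u := by ring
        by_cases hu : u ∈ Set.Iic (-z - h)
        · have hmem : -(u + h) ∈ Set.Ici z := Set.mem_Ici.2 (by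
            have := Set.mem_Iic.1 hu; linarith)
          rw [hFdef, Set.indicator_of_mem hmem, Set.indicator_of_mem hu]
          simp only [harg]
          rfl
        · have hmem : -(u + h) ∉ Set.Ici z := by
            rw [Set.mem_Ici, not_le]
            rw [Set.mem_Iic, not_le] at hu
            linarith
          rw [hFdef, Set.indicator_of_notMem hmem, Set.indicator_of_notMem hu]
      calc ∫⁻ t, F t = ∫⁻ u, F (-(u + h)) := by rw [htrans, hneg]
        _ = ∫⁻ u, (Set.Iic (-z - h)).indicator
              (fun u => ENNReal.ofReal (g (u + h) - g u)) u := by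
            exact lintegral_congr hpt
    rw [hrefl]
    have hgmeas : Measurable g := hmeas.comp measurable_neg
    have hg0 : ∀ u, 0 ≤ g u := fun u => hℓ0 _
    have hgS : ∀ u, g u ≤ S := fun u => hSle _
    have hgmono : MonotoneOn g (Set.Iic (-z - h + h)) := by
      have hzz : -z - h + h = -z := by ring
      rw [hzz]
      intro u hu v hv huv
      exact hanti (Set.mem_Ici.2 (by linarith [Set.mem_Iic.1 hv]))
        (Set.mem_Ici.2 (by linarith [Set.mem_Iic.1 hu])) (by linarith)
    exact tail_telescope_bound g hgmeas hg0 S hgS (-z - h) h hh hgmono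
  -- middle bound
  have hmid : ∫⁻ t in Set.Ioc (z - h) z, ENNReal.ofReal |ℓ t - ℓ (t + h)|
      ≤ ENNReal.ofReal h * ENNReal.ofReal S := by
    calc ∫⁻ t in Set.Ioc (z - h) z, ENNReal.ofReal |ℓ t - ℓ (t + h)|
        ≤ ∫⁻ _t in Set.Ioc (z - h) z, ENNReal.ofReal S := by
          refine lintegral_mono fun t => ENNReal.ofReal_le_ofReal ?_
          refine abs_le.2 ⟨by linarith [hℓ0 t, hSle (t + h)], by linarith [hℓ0 (t + h), hSle t]⟩
      _ = ENNReal.ofReal S * volume (Set.Ioc (z - h) z) := setLIntegral_const _ _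
      _ = ENNReal.ofReal h * ENNReal.ofReal S := by
          rw [Real.volume_Ioc]
          rw [show z - (z - h) = h by ring, mul_comm]
  -- total bound on the lintegral
  have htot : ∫⁻ t, ENNReal.ofReal |ℓ t - ℓ (t + h)| ≤ ENNReal.ofReal (3 * h * S) := by
    have hsplit1 : ∫⁻ t, ENNReal.ofReal |ℓ t - ℓ (t + h)|
        = (∫⁻ t in Set.Iic (z - h), ENNReal.ofReal |ℓ t - ℓ (t + h)|)
          + ∫⁻ t in Set.Ioi (z - h), ENNReal.ofReal |ℓ t - ℓ (t + h)| := by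
      rw [← lintegral_add_compl (fun t => ENNReal.ofReal |ℓ t - ℓ (t + h)|)
        (measurableSet_Iic : MeasurableSet (Set.Iic (z - h))), Set.compl_Iic]
    have hsplit2 : ∫⁻ t in Set.Ioi (z - h), ENNReal.ofReal |ℓ t - ℓ (t + h)|
        = (∫⁻ t in Set.Ioc (z - h) z, ENNReal.ofReal |ℓ t - ℓ (t + h)|)
          + ∫⁻ t in Set.Ioi z, ENNReal.ofReal |ℓ t - ℓ (t + h)| := by
      rw [← lintegral_union measurableSet_Ioi (Set.Ioc_disjoint_Ioi le_rfl),
        Set.Ioc_union_Ioi_eq_Ioi (by linarith : z - h ≤ z)]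
    rw [hsplit1, hsplit2]
    have hhs : ENNReal.ofReal h * ENNReal.ofReal S = ENNReal.ofReal (h * S) :=
      (ENNReal.ofReal_mul hh.le).symm
    calc (∫⁻ t in Set.Iic (z - h), ENNReal.ofReal |ℓ t - ℓ (t + h)|)
          + ((∫⁻ t in Set.Ioc (z - h) z, ENNReal.ofReal |ℓ t - ℓ (t + h)|)
          + ∫⁻ t in Set.Ioi z, ENNReal.ofReal |ℓ t - ℓ (t + h)|)
        ≤ ENNReal.ofReal h * ENNReal.ofReal S
          + (ENNReal.ofReal h * ENNReal.ofReal S + ENNReal.ofReal h * ENNReal.ofReal S) :=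
          add_le_add hleft (add_le_add hmid hright)
      _ = ENNReal.ofReal (3 * h * S) := by
          rw [hhs, ← ENNReal.ofReal_add (by positivity) (by positivity),
            ← ENNReal.ofReal_add (by positivity) (by positivity)]
          congr 1
          ring
  have hint : ∫ t, |ℓ t - ℓ (t + h)|
      = (∫⁻ t, ENNReal.ofReal |ℓ t - ℓ (t + h)|).toReal :=
    integral_eq_lintegral_of_nonneg_ae (Filter.Eventually.of_forall fun t => abs_nonneg _)
      habsmeas.aestronglyMeasurable
  rw [hint]
  exact ENNReal.toReal_le_of_le_ofReal (by positivity) htot
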